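/- Let $\zeta_8 \in \mathbb{C}$ be a primitive $8$th root of unity. Then for all $x_0, x_1, x_2, x_3 \in \mathbb{C}$, $D_4(x_0, \zeta_8 x_1, \zeta_8^2 x_2, \zeta_8^3 x_3) = (x_0^2 - x_2^2 + 2 x_1 x_3)^2 + (x_1^2 - x_3^2 - 2 x_0 x_2)^2$. -/

import Mathlib

/-- The group determinant of `C₄`: the determinant of the `4 × 4` circulant matrix whose
`(i, j)` entry is `x_{(i - j) mod 4}`. -/
def D4 {R : Type*} [CommRing R] (x0 x1 x2 x3 : R) : R :=
  Matrix.det !![x0, x3, x2, x1; x1, x0, x3, x2; x2, x1, x0, x3; x3, x2, x1, x0]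

/-- the twisted `C₄` group determinant as a sum of two squares. -/
theorem D4_zeta8_eq (ζ : ℂ) (hζ : IsPrimitiveRoot ζ 8) (x0 x1 x2 x3 : ℂ) :
    D4 x0 (ζ * x1) (ζ ^ 2 * x2) (ζ ^ 3 * x3) =
      (x0 ^ 2 - x2 ^ 2 + 2 * x1 * x3) ^ 2 + (x1 ^ 2 - x3 ^ 2 - 2 * x0 * x2) ^ 2 := by
  have h8 : ζ ^ 8 = 1 := hζ.pow_eq_one
  have hne : ζ ^ 4 ≠ 1 := hζ.pow_ne_one_of_pos_of_lt (by norm_num) (by norm_num)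
  have h4 : ζ ^ 4 = -1 := by
    have hz : (ζ ^ 4 - 1) * (ζ ^ 4 + 1) = 0 := by linear_combination h8
    rcases mul_eq_zero.mp hz with h | h
    · exact absurd (sub_eq_zero.mp h) hne
    · exact eq_neg_of_add_eq_zero_left h
  simp [D4, Matrix.det_succ_row_zero, Fin.sum_univ_succ, Fin.succAbove, Matrix.cons_val_succ, show (Fin.castSucc 2 : Fin 4) = 2 from rfl]
  linear_combination (-4*x0^2*x1*x3 + 4*x0*x1^2*x2 - 2*x0^2*x2^2 - x1^4 - 4*x0*x2*x3^2
    - 2*x1^2*x3^2 + 4*x1*x2^2*x3 - x2^4 - x3^4 + 4*x0*x2*x3^2*ζ^4 + 2*x1^2*x3^2*ζ^4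
    - 4*x1*x2^2*x3*ζ^4 + x2^4*ζ^4 + x3^4*ζ^4 - x3^4*ζ^8) * h4
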